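/- On M = ℂ[x,y] × ℂ[x,y] with the product (f, u) ⋆ (g, v) = (f·g, f·v + g·u + (1/2)·(∂f/∂x · ∂g/∂y − ∂f/∂y · ∂g/∂x)), the ⋆-commutator satisfies (f, u) ⋆ (g, v) − (g, v) ⋆ (f, u) = (0, ∂f/∂x · ∂g/∂y − ∂f/∂y · ∂g/∂x) for all f, g, u, v ∈ ℂ[x,y]; consequently, for all α, β, γ ∈ M one has (α ⋆ β − β ⋆ α) ⋆ γ − γ ⋆ (α ⋆ β − β ⋆ α) = 0, i.e. the third term of the lower central series of the ⋆-algebra vanishes. -/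
import Mathlib


noncomputable section

/-- M = ℂ[x,y] × ℂ[x,y], the even part ℂ[x,y] ⊕ Ω²(ℂ[x,y]) of the de Rham complex,
identifying w·dx∧dy with w. -/
abbrev Meven : Type := MvPolynomial (Fin 2) ℂ × MvPolynomial (Fin 2) ℂ

/-- The Feigin–Shoikhet star product:
(f, u) ⋆ (g, v) = (f·g, f·v + g·u + ½(∂f/∂x·∂g/∂y − ∂f/∂y·∂g/∂x)). -/
def star2 (α β : Meven) : Meven :=
  (α.1 * β.1,
    α.1 * β.2 + β.1 * α.2 +
      ((1 : ℂ) / 2) • (MvPolynomial.pderiv (0 : Fin 2) α.1 * MvPolynomial.pderiv (1 : Fin 2) β.1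
        - MvPolynomial.pderiv (1 : Fin 2) α.1 * MvPolynomial.pderiv (0 : Fin 2) β.1))

/-- the ⋆-commutator satisfies
(f,u) ⋆ (g,v) − (g,v) ⋆ (f,u) = (0, ∂f/∂x·∂g/∂y − ∂f/∂y·∂g/∂x), and consequently every
⋆-commutator is ⋆-central: (α⋆β − β⋆α)⋆γ − γ⋆(α⋆β − β⋆α) = 0, i.e. the third term of the
lower central series of the ⋆-algebra vanishes. -/
theorem stmt7 :
    (∀ f g u v : MvPolynomial (Fin 2) ℂ,
      star2 (f, u) (g, v) - star2 (g, v) (f, u) =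
        (0, MvPolynomial.pderiv (0 : Fin 2) f * MvPolynomial.pderiv (1 : Fin 2) g
            - MvPolynomial.pderiv (1 : Fin 2) f * MvPolynomial.pderiv (0 : Fin 2) g)) ∧
    (∀ α β γ : Meven,
      star2 (star2 α β - star2 β α) γ - star2 γ (star2 α β - star2 β α) = 0) := by
  constructor
  · intro f g u v
    simp only [star2, Prod.mk_sub_mk, Prod.mk.injEq]
    constructor
    · ring
    · ring_nf
      module
  · intro α β γ
    obtain ⟨f,u⟩ := α; obtain ⟨g,v⟩ := β; obtain ⟨h,w⟩ := γ
    simp only [star2, Prod.mk_sub_mk, map_mul, map_add, map_sub, map_smul]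
    ext <;> simp <;> ring_nf
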